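/- The diagram (Ĉ_N^{**}(H,I), ∂_h^{**}, ∂_v^{**}) is a double cochain complex; that is, ∂_h^{r+1,s} ∘ ∂_h^{r,s} = 0, ∂_v^{r,s+1} ∘ ∂_v^{r,s} = 0, and ∂_v^{r+1,s+1} ∘ ∂_h^{r,s} = − ∂_h^{r+1,s+1} ∘ ∂_v^{r,s} for all r ≥ 1, s ≥ 1 (and the appropriate degenerate cases for r = 0). -/

import Mathlib

open scoped Classical

/-- A linear cycle set structure on an additive abelian group. -/
structure LCS (A : Type*) [AddCommGroup A] where
  dot : A → A → A
  bij : ∀ a, Function.Bijective (dot a)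
  dot_add : ∀ a b c, dot a (b + c) = dot a b + dot a c
  add_dot : ∀ a b c, dot (a + b) c = dot (dot a b) (dot a c)

/-- `(r,s)`-cochains: functions of `r + s` arguments of `H` with values in `I`
(recording the canonical identification of `Hom(ℤ[H̄^r] ⊗ M̄(s), I)` with a
subgroup of the group of such functions). -/
abbrev Coch (H I : Type*) (r s : ℕ) : Type _ := (Fin r → H) → (Fin s → H) → I

/-- A cochain is normalized if it vanishes whenever one of its arguments is `0`;
this encodes the extension-by-zero of maps defined on `H̄ = H \ {0}`. -/
def Normalized {H I : Type*} [AddCommGroup H] [AddCommGroup I] {r s : ℕ}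
    (f : Coch H I r s) : Prop :=
  ∀ a b, ((∃ i, a i = 0) ∨ (∃ j, b j = 0)) → f a b = 0

/-- `σ` is an `(l, s-l)`-shuffle. -/
def IsShuffle (s l : ℕ) (σ : Equiv.Perm (Fin s)) : Prop :=
  (∀ i j : Fin s, i < j → (j : ℕ) < l → σ i < σ j) ∧
  (∀ i j : Fin s, i < j → l ≤ (i : ℕ) → σ i < σ j)

/-- A cochain kills all shuffle sums in its last `s` arguments; this encodes
membership in `Hom(ℤ[H̄^r] ⊗ M̄(s), I)` where `M̄(s) = ℤ[H̄^s]/sh(ℤ[H̄^s])`. -/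
def ShuffleRel {H I : Type*} [AddCommGroup H] [AddCommGroup I] {r s : ℕ}
    (f : Coch H I r s) : Prop :=
  ∀ l : ℕ, 1 ≤ l → l < s → ∀ (a : Fin r → H) (b : Fin s → H),
    ∑ σ : Equiv.Perm (Fin s),
      (if IsShuffle s l σ then (Equiv.Perm.sign σ : ℤ) • f a (fun k => b (σ.symm k))
       else 0) = 0

/-- Replace the `j`-th and `(j+1)`-th entries of a tuple by their sum. -/
def mergeAt {A : Type*} [Add A] {n : ℕ} (a : Fin (n + 1) → A) (j : ℕ) :
    Fin n → A :=
  fun i =>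
    if (i : ℕ) < j then a (Fin.castSucc i)
    else if (i : ℕ) = j then a (Fin.castSucc i) + a i.succ
    else a i.succ

/-- The horizontal differential `∂ₕ : Ĉ_N^{r,s} → Ĉ_N^{r+1,s}`. -/
def dH {H I : Type*} [AddCommGroup H] [AddCommGroup I] (cH : LCS H)
    (d : H → I → I) {r s : ℕ} (f : Coch H I r s) : Coch H I (r + 1) s :=
  fun a b =>
    f (fun i : Fin r => cH.dot (a 0) (a i.succ)) (fun j => cH.dot (a 0) (b j)) +
      ∑ j ∈ Finset.range r, (-1 : ℤ) ^ (j + 1) • f (mergeAt a j) b +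
      (-1 : ℤ) ^ (r + 1) •
        d (cH.dot (∑ i : Fin r, a (Fin.castSucc i)) (a (Fin.last r)))
          (f (fun i : Fin r => a (Fin.castSucc i)) b)

/-- The vertical differential `∂ᵥ : Ĉ_N^{r,s} → Ĉ_N^{r,s+1}`. -/
def dV {H I : Type*} [AddCommGroup H] [AddCommGroup I] {r s : ℕ}
    (f : Coch H I r s) : Coch H I r (s + 1) :=
  fun a b =>
    (-1 : ℤ) ^ r • f a (fun j : Fin s => b j.succ) +
      ∑ j ∈ Finset.range s, (-1 : ℤ) ^ (r + 1 + j) • f a (mergeAt b j) +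
      (-1 : ℤ) ^ (r + s + 1) • f a (fun j : Fin s => b (Fin.castSucc j))

/-- The diagonal map `D_{rs}^{r+s,1} : Ĉ_N^{r,s} → Ĉ_N^{r+s,1}`. -/
def Dmap {H I : Type*} [AddCommGroup H] [AddCommGroup I] (cH : LCS H)
    (d : H → I → I) (yl : I → H → I) {r s : ℕ} (f : Coch H I r s) :
    Coch H I (r + s) 1 :=
  fun a b =>
    (-1 : ℤ) ^ (r + s) •
      yl
        (d (cH.dot (∑ i : Fin r, a (Fin.castAdd s i)) (∑ j : Fin s, a (Fin.natAdd r j)))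
          (f (fun i : Fin r => a (Fin.castAdd s i)) (fun j : Fin s => a (Fin.natAdd r j))))
        (cH.dot (∑ i : Fin (r + s), a i) (b 0))

/-! ### vface: uniform face maps -/

def vface {A : Type*} [Add A] {n : ℕ} (k : ℕ) (b : Fin (n + 1) → A) : Fin n → A :=
  fun i => if (i : ℕ) + 1 < k then b i.castSucc
    else if (i : ℕ) + 1 = k then b i.castSucc + b i.succ
    else b i.succ

lemma mergeAt_eq_vface {A : Type*} [Add A] {n : ℕ} (b : Fin (n + 1) → A) (j : ℕ) :
    mergeAt b j = vface (j + 1) b := by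
  funext i; simp only [mergeAt, vface]; split_ifs <;> first | rfl | omega

lemma vface_zero {A : Type*} [Add A] {n : ℕ} (b : Fin (n + 1) → A) :
    vface 0 b = fun i => b i.succ := by
  funext i; simp only [vface]
  rw [if_neg (by omega), if_neg (by omega)]

lemma vface_large {A : Type*} [Add A] {n : ℕ} (b : Fin (n + 1) → A) {k : ℕ} (hk : n + 1 ≤ k) :
    vface k b = fun i => b i.castSucc := by
  funext i; simp only [vface]
  rw [if_pos (by have := i.isLt; omega)]

lemma vface_comm {A : Type*} [AddSemigroup A] {n : ℕ} (b : Fin (n + 2) → A) {k m : ℕ}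
    (h : m < k) : vface m (vface k b) = vface (k - 1) (vface m b) := by
  funext i
  simp only [vface, Fin.coe_castSucc, Fin.val_succ]
  split_ifs <;>
    first
      | rfl | omega
      | (simp only [Fin.succ_castSucc]; first | rfl | rw [add_assoc])

lemma vface_tail {A : Type*} [Add A] {n : ℕ} (b : Fin (n + 2) → A) {k : ℕ} (hk : 1 ≤ k) :
    (fun i : Fin n => vface (k + 1) b i.succ) = vface k (fun i : Fin (n + 1) => b i.succ) := by
  funext i
  simp only [vface, Fin.coe_castSucc, Fin.val_succ]
  split_ifs <;> first | rfl | omega | (simp only [Fin.succ_castSucc]; rfl)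

lemma vface_init {A : Type*} [Add A] {n : ℕ} (b : Fin (n + 2) → A) (m : ℕ) :
    (fun i : Fin n => vface m b i.castSucc)
      = vface m (fun i : Fin (n + 1) => b i.castSucc) := by
  funext i
  simp only [vface, Fin.coe_castSucc, Fin.val_succ]
  split_ifs <;> first | rfl | omega | (simp only [Fin.succ_castSucc]; rfl)

lemma vface_sum {A : Type*} [AddCommMonoid A] (k : ℕ) :
    ∀ (n : ℕ) (b : Fin (n + 1) → A), 1 ≤ k → k ≤ n →
      ∑ i : Fin n, vface k b i = ∑ i : Fin (n + 1), b i := by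
  induction k with
  | zero => intro n b h; omega
  | succ k ih =>
    intro n b _ hkn
    obtain ⟨n, rfl⟩ : ∃ n', n = n' + 1 := ⟨n - 1, by omega⟩
    rcases Nat.eq_zero_or_pos k with rfl | hk
    · rw [Fin.sum_univ_succ, Fin.sum_univ_succ,
        Fin.sum_univ_succ (f := fun i : Fin (n + 1) => b i.succ)]
      have h0 : vface 1 b 0 = b 0 + b ((0 : Fin (n + 1)).succ) := by
        simp only [vface]
        rw [if_neg (by omega), if_pos (by simp)]
        simp
      have h1 : ∀ i : Fin n, vface 1 b i.succ = b i.succ.succ := by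
        intro i; simp only [vface, Fin.val_succ]
        rw [if_neg (by omega), if_neg (by omega)]
      rw [h0]
      simp only [h1]
      rw [add_assoc]
    · rw [Fin.sum_univ_succ, Fin.sum_univ_succ (f := b)]
      have h0 : vface (k + 1) b 0 = b 0 := by
        simp only [vface]
        rw [if_pos (by simp; omega)]
        simp
      rw [h0]
      congr 1
      calc ∑ i : Fin n, vface (k + 1) b i.succ
          = ∑ i : Fin n, vface k (fun i : Fin (n + 1) => b i.succ) i := by
            rw [← vface_tail b hk]
        _ = ∑ i : Fin (n + 1), b i.succ := ih n _ hk (by omega)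

/-! ### LCS facts -/

section LCSfacts
variable {H : Type*} [AddCommGroup H] (cH : LCS H)

def LCS.hom (a : H) : H →+ H := AddMonoidHom.mk' (cH.dot a) (cH.dot_add a)

lemma LCS.dot_sum {ι : Type*} (a : H) (s : Finset ι) (g : ι → H) :
    cH.dot a (∑ i ∈ s, g i) = ∑ i ∈ s, cH.dot a (g i) :=
  map_sum (cH.hom a) g s

lemma LCS.mul_eq (mul : H → H → H) (hmul : ∀ h h', cH.dot h (mul h h' - h) = h')
    (h x : H) : mul h (cH.dot h x) = h + x := by
  have h2 : mul h (cH.dot h x) - h = x := (cH.bij h).1 (hmul h (cH.dot h x))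
  linear_combination (norm := abel) h2

lemma LCS.mul_dot (mul : H → H → H) (hmul : ∀ h h', cH.dot h (mul h h' - h) = h')
    (s u t : H) : mul (cH.dot s u) (cH.dot (s + u) t) = cH.dot s (u + t) := by
  rw [cH.add_dot s u t, cH.mul_eq mul hmul, ← cH.dot_add]

lemma LCS.vface_dot {n : ℕ} (c : H) (g : Fin (n + 1) → H) (k : ℕ) :
    vface k (fun j => cH.dot c (g j)) = fun j => cH.dot c (vface k g j) := by
  funext i
  simp only [vface]
  split_ifs <;> simp [cH.dot_add]

end LCSfacts

/-! ### cancellation -/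

lemma cancel_aux {I : Type*} [AddCommGroup I] (n : ℕ) (G : ℕ → ℕ → I)
    (hG : ∀ k m, m < k → k ≤ n + 1 → m ≤ n → G k m = G m (k - 1)) :
    ∑ k ∈ Finset.range (n + 2), ∑ m ∈ Finset.range (n + 1), (-1 : ℤ) ^ (k + m) • G k m = 0 := by
  classical
  rw [← Finset.sum_product']
  set s := Finset.range (n + 2) ×ˢ Finset.range (n + 1) with hs
  set F : ℕ × ℕ → I := fun p => (-1 : ℤ) ^ (p.1 + p.2) • G p.1 p.2 with hF
  rw [← Finset.sum_filter_add_sum_filter_not s (fun p => p.2 < p.1) F]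
  have key : ∑ p ∈ s.filter (fun p => p.2 < p.1), F p
      = ∑ p ∈ s.filter (fun p => ¬ p.2 < p.1), (-F p) := by
    apply Finset.sum_nbij' (i := fun p => (p.2, p.1 - 1)) (j := fun p => (p.2 + 1, p.1))
    · intro p hp
      simp only [Finset.mem_filter, Finset.mem_product, Finset.mem_range, hs] at hp ⊢
      omega
    · intro p hp
      simp only [Finset.mem_filter, Finset.mem_product, Finset.mem_range, hs] at hp ⊢
      omega
    · intro p hp
      simp only [Finset.mem_filter, Finset.mem_product, Finset.mem_range, hs] at hp
      obtain ⟨x, y⟩ := p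
      simp only [Prod.mk.injEq]
      simp only at hp
      constructor <;> first | omega | trivial
    · intro p hp
      simp only [Finset.mem_filter, Finset.mem_product, Finset.mem_range, hs] at hp
      obtain ⟨x, y⟩ := p
      simp only [Prod.mk.injEq]
      simp only at hp
      constructor <;> first | omega | trivial
    · intro p hp
      simp only [Finset.mem_filter, Finset.mem_product, Finset.mem_range, hs] at hp
      simp only [hF]
      rw [hG p.1 p.2 hp.2 (by omega) (by omega)]
      have h1 : p.2 + (p.1 - 1) + 1 = p.1 + p.2 := by omega
      rw [← h1, pow_succ]
      simp [mul_smul]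
  rw [key, Finset.sum_neg_distrib]
  abel

/-! ### hface and expansion lemmas -/

section main
variable {H I : Type*} [AddCommGroup H] [AddCommGroup I] (cH : LCS H) (d : H → I → I)

def hface {r s : ℕ} (k : ℕ) (f : Coch H I r s) : Coch H I (r + 1) s :=
  if k = 0 then
    fun a b => f (fun i => cH.dot (a 0) (a i.succ)) (fun j => cH.dot (a 0) (b j))
  else if k ≤ r then fun a b => f (vface k a) b
  else fun a b =>
    d (cH.dot (∑ i : Fin r, a (Fin.castSucc i)) (a (Fin.last r)))
      (f (fun i => a (Fin.castSucc i)) b)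

lemma hface_zero_apply {r s : ℕ} (f : Coch H I r s) (a : Fin (r + 1) → H) (b : Fin s → H) :
    hface cH d 0 f a b
      = f (fun i => cH.dot (a 0) (a i.succ)) (fun j => cH.dot (a 0) (b j)) := by
  unfold hface
  rw [if_pos rfl]

lemma hface_mid_apply {r s : ℕ} (f : Coch H I r s) {k : ℕ} (h1 : 1 ≤ k) (h2 : k ≤ r)
    (a : Fin (r + 1) → H) (b : Fin s → H) :
    hface cH d k f a b = f (vface k a) b := by
  simp only [hface]
  rw [if_neg (by omega), if_pos h2]

lemma hface_last_apply {r s : ℕ} (f : Coch H I r s) {k : ℕ} (h1 : r + 1 ≤ k)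
    (a : Fin (r + 1) → H) (b : Fin s → H) :
    hface cH d k f a b
      = d (cH.dot (∑ i : Fin r, a (Fin.castSucc i)) (a (Fin.last r)))
          (f (fun i => a (Fin.castSucc i)) b) := by
  simp only [hface]
  rw [if_neg (by omega), if_neg (by omega)]

lemma dH_eq {r s : ℕ} (f : Coch H I r s) (a : Fin (r + 1) → H) (b : Fin s → H) :
    dH cH d f a b = ∑ k ∈ Finset.range (r + 2), (-1 : ℤ) ^ k • hface cH d k f a b := by
  rw [Finset.sum_range_succ, Finset.sum_range_succ']
  have hm : ∀ j ∈ Finset.range r,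
      (-1 : ℤ) ^ (j + 1) • hface cH d (j + 1) f a b
        = (-1 : ℤ) ^ (j + 1) • f (mergeAt a j) b := by
    intro j hj
    rw [hface_mid_apply cH d f (by omega) (by simp at hj; omega), mergeAt_eq_vface]
  rw [Finset.sum_congr rfl hm, hface_zero_apply, hface_last_apply cH d f (le_refl (r + 1)),
    pow_zero, one_smul]
  simp only [dH]
  abel

lemma dV_eq {r s : ℕ} (f : Coch H I r s) (a : Fin r → H) (b : Fin (s + 1) → H) :
    dV f a b = ∑ k ∈ Finset.range (s + 2), (-1 : ℤ) ^ (r + k) • f a (vface k b) := by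
  rw [Finset.sum_range_succ, Finset.sum_range_succ']
  simp only [dV, mergeAt_eq_vface, vface_zero]
  rw [vface_large b (by omega)]
  have he : ∀ j : ℕ, r + 1 + j = r + (j + 1) := by omega
  simp only [he, Nat.add_zero, ← Nat.add_assoc]
  abel

lemma vface_entry_zero {r : ℕ} (a : Fin (r + 2) → H) {k : ℕ} (hk : 2 ≤ k) :
    vface k a 0 = a 0 := by
  simp only [vface]
  rw [if_pos (by simp; omega)]
  simp

lemma vface_one_zero {r : ℕ} (a : Fin (r + 2) → H) :
    vface 1 a (0 : Fin (r + 1)) = a 0 + a 1 := by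
  simp only [vface]
  rw [if_neg (by omega), if_pos (by simp)]
  simp

lemma vface_one_succ {r : ℕ} (a : Fin (r + 2) → H) (i : Fin r) :
    vface 1 a i.succ = a i.succ.succ := by
  simp only [vface, Fin.val_succ]
  rw [if_neg (by omega), if_neg (by omega)]

lemma vface_entry_last {r : ℕ} (a : Fin (r + 2) → H) {m : ℕ} (hm : m ≤ r) :
    vface m a (Fin.last r) = a (Fin.last (r + 1)) := by
  simp only [vface, Fin.val_last]
  rw [if_neg (by omega), if_neg (by omega), Fin.succ_last]

lemma vface_merge_last {r : ℕ} (a : Fin (r + 2) → H) :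
    vface (r + 1) a (Fin.last r)
      = a ((Fin.last r).castSucc) + a (Fin.last (r + 1)) := by
  simp only [vface, Fin.val_last]
  split_ifs with h1 h2
  · omega
  · rw [Fin.succ_last]

lemma vface_merge_castSucc {r : ℕ} (a : Fin (r + 2) → H) (i : Fin r) :
    vface (r + 1) a i.castSucc = a i.castSucc.castSucc := by
  simp only [vface, Fin.coe_castSucc]
  rw [if_pos (by have := i.isLt; omega)]

lemma hface_comm (mul : H → H → H)
    (hmul : ∀ h h', cH.dot h (mul h h' - h) = h')
    (hd3 : ∀ (h h' : H) (y : I), d (mul h' h) y = d h (d h' y))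
    {r s : ℕ} (f : Coch H I r s) {k m : ℕ} (hmk : m < k) (hk : k ≤ r + 2) (hm : m ≤ r + 1)
    (a : Fin (r + 2) → H) (b : Fin s → H) :
    hface cH d k (hface cH d m f) a b = hface cH d m (hface cH d (k - 1) f) a b := by
  rcases Nat.eq_zero_or_pos m with rfl | hm1
  · -- m = 0
    rcases Nat.lt_or_ge k (r + 2) with hk2 | hk2
    · rcases Nat.lt_or_ge k 2 with hk1 | hk1
      · -- k = 1
        obtain rfl : k = 1 := by omega
        rw [hface_mid_apply cH d _ le_rfl (by omega), hface_zero_apply]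
        have h1 : (1 : ℕ) - 1 = 0 := rfl
        rw [h1, hface_zero_apply, hface_zero_apply]
        congr 1
        · funext i
          rw [vface_one_zero, vface_one_succ, cH.add_dot, Fin.succ_zero_eq_one]
        · funext j
          rw [vface_one_zero, cH.add_dot, Fin.succ_zero_eq_one]
      · -- 2 ≤ k ≤ r + 1
        obtain ⟨k', rfl⟩ : ∃ k', k = k' + 2 := ⟨k - 2, by omega⟩
        have h1 : k' + 2 - 1 = k' + 1 := rfl
        rw [h1, hface_mid_apply cH d _ (by omega) (by omega), hface_zero_apply,
          hface_zero_apply, hface_mid_apply cH d _ (by omega) (by omega)]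
        have h2 : (fun i : Fin r => vface (k' + 2) a i.succ)
            = vface (k' + 1) (fun i : Fin (r + 1) => a i.succ) :=
          vface_tail a (by omega)
        have h3 : vface (k' + 2) a 0 = a 0 := vface_entry_zero a (by omega)
        rw [cH.vface_dot (a 0) (fun i : Fin (r + 1) => a i.succ) (k' + 1)]
        simp only [h3]
        congr 1
        funext i
        have := congrFun h2 i
        rw [this]
    · -- m = 0, k = r + 2
      obtain rfl : k = r + 2 := by omega
      have h1 : r + 2 - 1 = r + 1 := rfl
      rw [h1, hface_last_apply cH d _ (by omega), hface_zero_apply, hface_zero_apply,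
        hface_last_apply cH d _ (by omega)]
      simp only [Fin.castSucc_zero]
      rw [← cH.dot_sum, ← cH.add_dot, Fin.succ_last]
      have h2 : a 0 + ∑ i : Fin r, a (Fin.castSucc i).succ
          = ∑ i : Fin (r + 1), a i.castSucc := by
        rw [Fin.sum_univ_succ (f := fun i : Fin (r + 1) => a i.castSucc)]
        simp only [Fin.castSucc_zero, Fin.succ_castSucc]
      rw [h2]
      simp only [Fin.succ_last, Fin.succ_castSucc]
  · -- 1 ≤ m
    rcases Nat.lt_or_ge k (r + 2) with hk2 | hk2
    · -- both middle faces
      rw [hface_mid_apply cH d _ (by omega) (by omega),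
        hface_mid_apply cH d _ hm1 (by omega),
        hface_mid_apply cH d _ hm1 (by omega),
        hface_mid_apply cH d _ (by omega) (by omega)]
      rw [vface_comm a hmk]
    · obtain rfl : k = r + 2 := by omega
      have h1 : r + 2 - 1 = r + 1 := rfl
      rcases Nat.lt_or_ge m (r + 1) with hm2 | hm2
      · -- 1 ≤ m ≤ r, k = r + 2
        rw [h1, hface_last_apply cH d _ (by omega),
          hface_mid_apply cH d _ hm1 (by omega),
          hface_mid_apply cH d _ hm1 (by omega),
          hface_last_apply cH d _ (by omega)]
        rw [vface_entry_last a (by omega)]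
        have h3 : (fun i : Fin r => vface m a i.castSucc)
            = vface m (fun i : Fin (r + 1) => a i.castSucc) := vface_init a m
        have h4 : ∑ i : Fin r, vface m a i.castSucc
            = ∑ i : Fin (r + 1), a i.castSucc := by
          have h9 := vface_sum m r (fun i : Fin (r + 1) => a i.castSucc) hm1 (by omega)
          rw [← h3] at h9
          exact h9
        rw [h4, h3]
      · -- m = r + 1, k = r + 2
        obtain rfl : m = r + 1 := by omega
        rw [h1, hface_last_apply cH d _ (by omega),
          hface_last_apply cH d _ (by omega),
          hface_mid_apply cH d _ (by omega) (by omega),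
          hface_last_apply cH d _ (by omega)]
        have h5 : (fun i : Fin r => vface (r + 1) a i.castSucc)
            = fun i : Fin r => a i.castSucc.castSucc := by
          funext i; exact vface_merge_castSucc a i
        rw [vface_merge_last a, h5]
        have h7 : ∑ i : Fin (r + 1), a i.castSucc
            = (∑ i : Fin r, a i.castSucc.castSucc) + a ((Fin.last r).castSucc) := by
          rw [Fin.sum_univ_castSucc (f := fun i : Fin (r + 1) => a i.castSucc)]
        rw [h7, ← Fin.succ_last, ← cH.mul_dot mul hmul (∑ i : Fin r, a i.castSucc.castSucc)
          (a ((Fin.last r).castSucc)) (a (Fin.last r).succ), hd3]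

def dhom (hd1 : ∀ h y y', d h (y + y') = d h y + d h y') (h : H) : I →+ I :=
  AddMonoidHom.mk' (d h) (hd1 h)

lemma d_zsmul (hd1 : ∀ h y y', d h (y + y') = d h y + d h y') (h : H) (z : ℤ) (y : I) :
    d h (z • y) = z • d h y :=
  map_zsmul (dhom d hd1 h) z y

lemma d_sum (hd1 : ∀ h y y', d h (y + y') = d h y + d h y') (h : H) {ι : Type*}
    (t : Finset ι) (g : ι → I) :
    d h (∑ i ∈ t, g i) = ∑ i ∈ t, d h (g i) :=
  map_sum (dhom d hd1 h) g t

lemma hface_dH (hd1 : ∀ h y y', d h (y + y') = d h y + d h y')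
    {r s : ℕ} (f : Coch H I r s) (k : ℕ) (a : Fin (r + 2) → H) (b : Fin s → H) :
    hface cH d k (dH cH d f) a b
      = ∑ m ∈ Finset.range (r + 2), (-1 : ℤ) ^ m • hface cH d k (hface cH d m f) a b := by
  rcases Nat.eq_zero_or_pos k with rfl | hk1
  · rw [hface_zero_apply, dH_eq]
    refine Finset.sum_congr rfl fun m hm => ?_
    rw [hface_zero_apply]
  · rcases Nat.lt_or_ge k (r + 2) with hk2 | hk2
    · rw [hface_mid_apply cH d _ hk1 (by omega), dH_eq]
      refine Finset.sum_congr rfl fun m hm => ?_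
      rw [hface_mid_apply cH d _ hk1 (by omega)]
    · rw [hface_last_apply cH d _ (by omega), dH_eq, d_sum d hd1]
      refine Finset.sum_congr rfl fun m hm => ?_
      rw [d_zsmul d hd1,
        ← hface_last_apply cH d (hface cH d m f) (k := k) (by omega) a b]

lemma hface_dV (hd1 : ∀ h y y', d h (y + y') = d h y + d h y')
    {r s : ℕ} (f : Coch H I r s) (m : ℕ) (a : Fin (r + 1) → H)
    (b : Fin (s + 1) → H) :
    hface cH d m (dV f) a b
      = ∑ k ∈ Finset.range (s + 2), (-1 : ℤ) ^ (r + k) • hface cH d m f a (vface k b) := by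
  rcases Nat.eq_zero_or_pos m with rfl | hm1
  · rw [hface_zero_apply, dV_eq]
    refine Finset.sum_congr rfl fun k hk => ?_
    rw [hface_zero_apply, cH.vface_dot]
  · rcases Nat.lt_or_ge m (r + 1) with hm2 | hm2
    · rw [hface_mid_apply cH d _ hm1 (by omega), dV_eq]
      refine Finset.sum_congr rfl fun k hk => ?_
      rw [hface_mid_apply cH d _ hm1 (by omega)]
    · rw [hface_last_apply cH d _ (by omega), dV_eq, d_sum d hd1]
      refine Finset.sum_congr rfl fun k hk => ?_
      rw [d_zsmul d hd1, ← hface_last_apply cH d f (k := m) (by omega) a (vface k b)]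

end main


/-- The diagram `(Ĉ_N^{**}(H,I), ∂ₕ^{**}, ∂ᵥ^{**})` is a double cochain complex:
`∂ₕ∘∂ₕ = 0`, `∂ᵥ∘∂ᵥ = 0` and `∂ᵥ∘∂ₕ = -∂ₕ∘∂ᵥ`.  Here `mul` is the brace product
of `H`, characterized by `h · (mul h h' - h) = h'`. -/
theorem statement14 {H I : Type*} [AddCommGroup H] [AddCommGroup I]
    (cH : LCS H) (d : H → I → I)
    (mul : H → H → H) (hmul : ∀ h h', cH.dot h (mul h h' - h) = h')
    (hd1 : ∀ h y y', d h (y + y') = d h y + d h y')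
    (hd2 : ∀ y, d 0 y = y)
    (hd3 : ∀ (h h' : H) (y : I), d (mul h' h) y = d h (d h' y)) :
    ∀ (r s : ℕ), 1 ≤ s → ∀ f : Coch H I r s, Normalized f → ShuffleRel f →
      dH cH d (dH cH d f) = 0 ∧
      dV (dV f) = 0 ∧
      dV (dH cH d f) = -dH cH d (dV f) := by
  intro r s hs f _ _
  refine ⟨?_, ?_, ?_⟩
  · funext a b
    show dH cH d (dH cH d f) a b = 0
    rw [dH_eq]
    have e1 : ∀ k : ℕ, hface cH d k (dH cH d f) a b
        = ∑ m ∈ Finset.range (r + 2), (-1 : ℤ) ^ m • hface cH d k (hface cH d m f) a b :=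
      fun k => hface_dH cH d hd1 f k a b
    simp only [e1, Finset.smul_sum, smul_smul, ← pow_add]
    exact cancel_aux (r + 1) (fun k m => hface cH d k (hface cH d m f) a b)
      (fun k m h1 h2 h3 => hface_comm cH d mul hmul hd3 f h1 (by omega) (by omega) a b)
  · funext a b
    show dV (dV f) a b = 0
    rw [dV_eq]
    simp only [dV_eq]
    have sgn2 : ∀ (k m : ℕ) (x : I),
        ((-1 : ℤ) ^ (r + k)) • ((-1 : ℤ) ^ (r + m)) • x = ((-1 : ℤ) ^ (k + m)) • x := by
      intro k m x
      rw [smul_smul, ← pow_add]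
      congr 1
      have h : r + k + (r + m) = 2 * r + (k + m) := by ring
      rw [h, pow_add, pow_mul]
      norm_num
    simp only [Finset.smul_sum, sgn2]
    exact cancel_aux (s + 1) (fun k m => f a (vface m (vface k b)))
      (fun k m h1 _ _ => congrArg (f a) (vface_comm b h1))
  · funext a b
    show dV (dH cH d f) a b = (-dH cH d (dV f)) a b
    simp only [Pi.neg_apply]
    rw [dV_eq]
    simp only [dH_eq]
    have e2 : ∀ m : ℕ, hface cH d m (dV f) a b
        = ∑ k ∈ Finset.range (s + 2), (-1 : ℤ) ^ (r + k) • hface cH d m f a (vface k b) :=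
      fun m => hface_dV cH d hd1 f m a b
    simp only [e2]
    have sgn3 : ∀ (k m : ℕ) (x : I),
        (-1 : ℤ) ^ (r + 1 + k) • (-1 : ℤ) ^ m • x
          = -((-1 : ℤ) ^ m • (-1 : ℤ) ^ (r + k) • x) := by
      intro k m x
      rw [smul_smul, smul_smul, ← neg_smul]
      congr 1
      have h : r + 1 + k = (r + k) + 1 := by ring
      rw [h, pow_succ]
      ring
    simp only [Finset.smul_sum, sgn3, Finset.sum_neg_distrib]
    rw [Finset.sum_comm]
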